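/- Suppose the curve C : Q₁(u,v,w)Q₃(u,v,w) = Q₂(u,v,w)² over ℚ (with integral quadratic forms Q₁, Q₂, Q₃) is such that Q₁, Q₃ and Q₁Q₃ − Q₂² have no common nontrivial zero modulo any prime p ∉ S for a finite set of primes S. Then every rational point (u₀:v₀:w₀) ∈ C(ℚ) admits δ ∈ ℚ* with ord_p(δ) even for all p ∉ S, and r₀, s₀ ∈ ℚ, such that Q₁(u₀,v₀,w₀) = δr₀², Q₂(u₀,v₀,w₀) = δr₀s₀, Q₃(u₀,v₀,w₀) = δs₀². -/

import Mathlib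

open MvPolynomial
lemma eval_smul_homog {σ R : Type*} [Fintype σ] [CommSemiring R]
    {φ : MvPolynomial σ R} {n : ℕ} (h : φ.IsHomogeneous n) (c : R) (x : σ → R) :
    eval (fun i => c * x i) φ = c ^ n * eval x φ := by
  rw [eval_eq', eval_eq', Finset.mul_sum]
  refine Finset.sum_congr rfl fun d hd => ?_
  have hdeg : ∑ i, d i = n := by
    have h1 := h (MvPolynomial.mem_support_iff.mp hd)
    rw [Finsupp.weight_apply, Finsupp.sum_fintype] at h1
    · simpa using h1
    · simp
  simp_rw [mul_pow]
  rw [Finset.prod_mul_distrib, Finset.prod_pow_eq_pow_sum, hdeg]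
  ring

lemma eval_map_int {R : Type*} [CommRing R] (f : ℤ →+* R) (x : Fin 3 → ℤ)
    (φ : MvPolynomial (Fin 3) ℤ) :
    eval (fun i => f (x i)) (MvPolynomial.map f φ) = f (eval x φ) := by
  rw [eval_map]
  rw [show eval x φ = eval₂ (RingHom.id ℤ) x φ from rfl]
  rw [eval₂_comp_left f (RingHom.id ℤ) x φ]
  rfl

lemma eval_map_int' {R : Type*} [CommRing R] (x : Fin 3 → ℤ) (φ : MvPolynomial (Fin 3) ℤ) :
    eval (fun i => ((x i : ℤ) : R)) (MvPolynomial.map (Int.castRingHom R) φ)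
      = ((eval x φ : ℤ) : R) :=
  eval_map_int (Int.castRingHom R) x φ

lemma exists_coprime_rep (u v w : ℚ) (h : ¬(u = 0 ∧ v = 0 ∧ w = 0)) :
    ∃ (q : ℚ) (U V W : ℤ), q ≠ 0 ∧ Int.gcd (Int.gcd U V) W = 1 ∧
      u = q * U ∧ v = q * V ∧ w = q * W := by
  set A : ℤ := u.num * v.den * w.den with hA
  set B : ℤ := (u.den : ℤ) * v.num * w.den with hB
  set Cc : ℤ := (u.den : ℤ) * v.den * w.num with hCc
  set N : ℤ := (u.den : ℤ) * v.den * w.den with hN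
  have hud : (u.den : ℚ) ≠ 0 := by exact_mod_cast u.den_ne_zero
  have hvd : (v.den : ℚ) ≠ 0 := by exact_mod_cast v.den_ne_zero
  have hwd : (w.den : ℚ) ≠ 0 := by exact_mod_cast w.den_ne_zero
  have hNQ : (N : ℚ) ≠ 0 := by rw [hN]; push_cast; positivity
  have hu' : u * (u.den : ℚ) = u.num := Rat.mul_den_eq_num u
  have hv' : v * (v.den : ℚ) = v.num := Rat.mul_den_eq_num v
  have hw' : w * (w.den : ℚ) = w.num := Rat.mul_den_eq_num w
  have hu : u * N = (A : ℚ) := by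
    rw [hA, hN]; push_cast; rw [show u * ((u.den:ℚ) * v.den * w.den) = (u * u.den) * v.den * w.den by ring, hu']
  have hv : v * N = (B : ℚ) := by
    rw [hB, hN]; push_cast; rw [show v * ((u.den:ℚ) * v.den * w.den) = (u.den:ℚ) * (v * v.den) * w.den by ring, hv']
  have hw : w * N = (Cc : ℚ) := by
    rw [hCc, hN]; push_cast; rw [show w * ((u.den:ℚ) * v.den * w.den) = (u.den:ℚ) * v.den * (w * w.den) by ring, hw']
  set g : ℕ := Int.gcd (Int.gcd A B) Cc with hg
  have hg0 : g ≠ 0 := by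
    intro h0
    rw [hg, Int.gcd_eq_zero_iff] at h0
    obtain ⟨hAB, hC0⟩ := h0
    rw [Nat.cast_eq_zero, Int.gcd_eq_zero_iff] at hAB
    obtain ⟨hA0, hB0⟩ := hAB
    apply h
    refine ⟨?_, ?_, ?_⟩
    · have : u.num = 0 := by
        have := hA0; rw [hA] at this
        simpa [Int.mul_eq_zero, u.den_ne_zero, v.den_ne_zero, w.den_ne_zero] using this
      exact Rat.num_eq_zero.mp this
    · have : v.num = 0 := by
        have := hB0; rw [hB] at this
        simpa [Int.mul_eq_zero, u.den_ne_zero, v.den_ne_zero, w.den_ne_zero] using this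
      exact Rat.num_eq_zero.mp this
    · have : w.num = 0 := by
        have := hC0; rw [hCc] at this
        simpa [Int.mul_eq_zero, u.den_ne_zero, v.den_ne_zero, w.den_ne_zero] using this
      exact Rat.num_eq_zero.mp this
  have hgA : (g : ℤ) ∣ A := dvd_trans (Int.gcd_dvd_left _ _) (Int.gcd_dvd_left _ _)
  have hgB : (g : ℤ) ∣ B := dvd_trans (Int.gcd_dvd_left _ _) (Int.gcd_dvd_right _ _)
  have hgC : (g : ℤ) ∣ Cc := Int.gcd_dvd_right _ _
  refine ⟨(g : ℚ) / N, A / g, B / g, Cc / g, ?_, ?_, ?_, ?_, ?_⟩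
  · have : (g : ℚ) ≠ 0 := by exact_mod_cast hg0
    exact div_ne_zero this hNQ
  · have h1 : (g:ℤ) * (A / g) = A := Int.mul_ediv_cancel' hgA
    have h2 : (g:ℤ) * (B / g) = B := Int.mul_ediv_cancel' hgB
    have h3 : (g:ℤ) * (Cc / g) = Cc := Int.mul_ediv_cancel' hgC
    have key : g = g * Int.gcd (Int.gcd (A/g) (B/g)) (Cc/g) := by
      conv_lhs => rw [hg, ← h1, ← h2, ← h3]
      rw [Int.gcd_mul_left, Int.natAbs_natCast, Nat.cast_mul, Int.gcd_mul_left, Int.natAbs_natCast]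
    exact ((Nat.mul_eq_left hg0).mp key.symm).symm ▸ rfl
  · rw [Int.cast_div_charZero hgA]
    field_simp
    linear_combination (g:ℚ) * hu
  · rw [Int.cast_div_charZero hgB]
    field_simp
    linear_combination (g:ℚ) * hv
  · rw [Int.cast_div_charZero hgC]
    field_simp
    linear_combination (g:ℚ) * hw

lemma even_padicValInt_of {p : ℕ} (hp : p.Prime) {A B C : ℤ} (hA : A ≠ 0)
    (h : A * C = B ^ 2) (hco : ¬((p:ℤ) ∣ A ∧ (p:ℤ) ∣ C)) : Even (padicValInt p A) := by
  haveI : Fact p.Prime := ⟨hp⟩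
  by_cases hd : (p:ℤ) ∣ A
  · have hC0 : C ≠ 0 := by
      intro h0; exact hco ⟨hd, h0 ▸ dvd_zero _⟩
    have hB : B ≠ 0 := by
      intro h0
      rw [h0, zero_pow two_ne_zero] at h
      rcases mul_eq_zero.mp h with h' | h' <;> [exact hA h'; exact hC0 h']
    have hcp : ¬ (p:ℤ) ∣ C := fun hc => hco ⟨hd, hc⟩
    have h1 : padicValInt p A + padicValInt p C = 2 * padicValInt p B := by
      rw [← padicValInt.mul hA hC0, h, pow_two, padicValInt.mul hB hB]; ring
    have h2 : padicValInt p C = 0 := padicValInt.eq_zero_of_not_dvd hcp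
    exact ⟨padicValInt p B, by omega⟩
  · rw [padicValInt.eq_zero_of_not_dvd hd]
    exact ⟨0, rfl⟩


/-- Let `Q₁, Q₂, Q₃` be integral quadratic forms such that `Q₁`, `Q₃` and
`Q₁Q₃ − Q₂²` have no common nontrivial zero modulo any prime `p ∉ S` (`S` a finite set of
primes). Then every rational point of `C : Q₁Q₃ = Q₂²` admits `δ ∈ ℚ*` with even `p`-adic
valuation for all primes `p ∉ S`, and `r₀, s₀ ∈ ℚ`, with `Q₁ = δr₀²`, `Q₂ = δr₀s₀`,
`Q₃ = δs₀²` at that point. -/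
theorem descent_on_quartic (Q₁ Q₂ Q₃ : MvPolynomial (Fin 3) ℤ)
    (h1 : Q₁.IsHomogeneous 2) (h2 : Q₂.IsHomogeneous 2) (h3 : Q₃.IsHomogeneous 2)
    (S : Finset ℕ)
    (hS : ∀ p : ℕ, p.Prime → p ∉ S →
      ∀ x : Fin 3 → ZMod p,
        eval x (MvPolynomial.map (Int.castRingHom (ZMod p)) Q₁) = 0 →
        eval x (MvPolynomial.map (Int.castRingHom (ZMod p)) Q₃) = 0 →
        eval x (MvPolynomial.map (Int.castRingHom (ZMod p)) (Q₁ * Q₃ - Q₂ ^ 2)) = 0 →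
        x = 0) :
    ∀ u₀ v₀ w₀ : ℚ, ¬(u₀ = 0 ∧ v₀ = 0 ∧ w₀ = 0) →
      aeval ![u₀, v₀, w₀] (Q₁ * Q₃) = (aeval ![u₀, v₀, w₀] Q₂ : ℚ) ^ 2 →
      ∃ δ : ℚ, δ ≠ 0 ∧ (∀ p : ℕ, p.Prime → p ∉ S → Even (padicValRat p δ)) ∧
        ∃ r₀ s₀ : ℚ,
          aeval ![u₀, v₀, w₀] Q₁ = δ * r₀ ^ 2 ∧
          aeval ![u₀, v₀, w₀] Q₂ = δ * (r₀ * s₀) ∧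
          aeval ![u₀, v₀, w₀] Q₃ = δ * s₀ ^ 2 := by
  intro u₀ v₀ w₀ hnz hC
  obtain ⟨q, U, V, W, hq, hgcd, hu, hv, hw⟩ := exists_coprime_rep u₀ v₀ w₀ hnz
  set x : Fin 3 → ℤ := ![U, V, W] with hx
  have hvec : (![u₀, v₀, w₀] : Fin 3 → ℚ) = fun i => q * ((x i : ℚ)) := by
    funext i; fin_cases i <;> simp [hx, hu, hv, hw]
  set A := eval x Q₁ with hA
  set B := eval x Q₂ with hB
  set Cv := eval x Q₃ with hCv
  have key : ∀ φ : MvPolynomial (Fin 3) ℤ, φ.IsHomogeneous 2 →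
      aeval ![u₀, v₀, w₀] φ = q ^ 2 * ((eval x φ : ℤ) : ℚ) := by
    intro φ hφ
    rw [hvec]
    have e1 : (aeval (fun i => q * ((x i : ℚ))) φ : ℚ)
        = eval (fun i => q * ((x i : ℚ))) (MvPolynomial.map (Int.castRingHom ℚ) φ) := by
      rw [eval_map]; rfl
    rw [e1, eval_smul_homog (hφ.map (Int.castRingHom ℚ)) q]
    congr 1
    exact eval_map_int (Int.castRingHom ℚ) x φ
  have hQ1 : aeval ![u₀, v₀, w₀] Q₁ = q ^ 2 * (A : ℚ) := key Q₁ h1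
  have hQ2 : aeval ![u₀, v₀, w₀] Q₂ = q ^ 2 * (B : ℚ) := key Q₂ h2
  have hQ3 : aeval ![u₀, v₀, w₀] Q₃ = q ^ 2 * (Cv : ℚ) := key Q₃ h3
  have hrelQ : (A : ℚ) * Cv = (B : ℚ) ^ 2 := by
    rw [map_mul, hQ1, hQ3, hQ2] at hC
    have h4 : (q ^ 2) ^ 2 * ((A : ℚ) * Cv) = (q ^ 2) ^ 2 * ((B : ℚ) ^ 2) := by
      linear_combination hC
    exact mul_left_cancel₀ (pow_ne_zero 2 (pow_ne_zero 2 hq)) h4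
  have hrel : A * Cv = B ^ 2 := by exact_mod_cast hrelQ
  have hkey : ∀ p : ℕ, p.Prime → p ∉ S → ¬((p : ℤ) ∣ A ∧ (p : ℤ) ∣ Cv) := by
    rintro p hp hpS ⟨hdA, hdC⟩
    haveI : Fact p.Prime := ⟨hp⟩
    set y : Fin 3 → ZMod p := fun i => ((x i : ℤ) : ZMod p) with hy
    have e1 : eval y (MvPolynomial.map (Int.castRingHom (ZMod p)) Q₁) = 0 := by
      rw [hy, eval_map_int']
      exact (ZMod.intCast_zmod_eq_zero_iff_dvd _ _).mpr hdA
    have e3 : eval y (MvPolynomial.map (Int.castRingHom (ZMod p)) Q₃) = 0 := by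
      rw [hy, eval_map_int']
      exact (ZMod.intCast_zmod_eq_zero_iff_dvd _ _).mpr hdC
    have e2 : eval y (MvPolynomial.map (Int.castRingHom (ZMod p)) (Q₁ * Q₃ - Q₂ ^ 2)) = 0 := by
      rw [hy, eval_map_int', map_sub, map_mul, map_pow, ← hA, ← hB, ← hCv, hrel]
      simp
    have hy0 := hS p hp hpS y e1 e3 e2
    have hdvd : ∀ i : Fin 3, (p : ℤ) ∣ x i := by
      intro i
      have : y i = 0 := by rw [hy0]; rfl
      rwa [hy, ZMod.intCast_zmod_eq_zero_iff_dvd] at this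
    have hU : (p : ℤ) ∣ U := by simpa [hx] using hdvd 0
    have hV : (p : ℤ) ∣ V := by simpa [hx] using hdvd 1
    have hW : (p : ℤ) ∣ W := by simpa [hx] using hdvd 2
    have hd1 : (p : ℤ) ∣ (Int.gcd (Int.gcd U V) W : ℤ) :=
      Int.dvd_coe_gcd (Int.dvd_coe_gcd hU hV) hW
    rw [hgcd] at hd1
    push_cast at hd1
    have h2 := Int.le_of_dvd one_pos hd1
    have h3 := hp.two_le
    omega
  by_cases hA0 : A = 0
  · -- then B = 0 and Cv ≠ 0
    have hB0 : B = 0 := by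
      have : B ^ 2 = 0 := by rw [← hrel, hA0, zero_mul]
      exact pow_eq_zero_iff two_ne_zero |>.mp this
    have hC0 : Cv ≠ 0 := by
      intro hc
      obtain ⟨p, hpge, hp⟩ := Nat.exists_infinite_primes ((S.sup id) + 1)
      have hpS : p ∉ S := by
        intro hmem
        have := Finset.le_sup (f := id) hmem
        simp only [id] at this
        omega
      exact hkey p hp hpS ⟨hA0 ▸ dvd_zero _, hc ▸ dvd_zero _⟩
    refine ⟨q ^ 2 * (Cv : ℚ), ?_, ?_, 0, 1, ?_, ?_, ?_⟩
    · exact mul_ne_zero (pow_ne_zero 2 hq) (Int.cast_ne_zero.mpr hC0)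
    · intro p hp hpS
      haveI : Fact p.Prime := ⟨hp⟩
      rw [padicValRat.mul (pow_ne_zero 2 hq) (Int.cast_ne_zero.mpr hC0),
        padicValRat.pow q, padicValRat.of_int]
      obtain ⟨k, hk⟩ := even_padicValInt_of hp hC0 (by rw [mul_comm]; exact hrel)
        (fun ⟨h₁, h₂⟩ => hkey p hp hpS ⟨h₂, h₁⟩)
      exact ⟨padicValRat p q + k, by push_cast [hk]; ring⟩
    · rw [hQ1, hA0]; push_cast; ring
    · rw [hQ2, hB0]; push_cast; ring
    · rw [hQ3]; ring
  · refine ⟨q ^ 2 * (A : ℚ), ?_, ?_, 1, (B : ℚ) / (A : ℚ), ?_, ?_, ?_⟩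
    · exact mul_ne_zero (pow_ne_zero 2 hq) (Int.cast_ne_zero.mpr hA0)
    · intro p hp hpS
      haveI : Fact p.Prime := ⟨hp⟩
      rw [padicValRat.mul (pow_ne_zero 2 hq) (Int.cast_ne_zero.mpr hA0),
        padicValRat.pow q, padicValRat.of_int]
      obtain ⟨k, hk⟩ := even_padicValInt_of hp hA0 hrel (hkey p hp hpS)
      exact ⟨padicValRat p q + k, by push_cast [hk]; ring⟩
    · rw [hQ1]; ring
    · rw [hQ2]
      have hAQ : (A : ℚ) ≠ 0 := Int.cast_ne_zero.mpr hA0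
      field_simp
    · rw [hQ3]
      have hAQ : (A : ℚ) ≠ 0 := Int.cast_ne_zero.mpr hA0
      field_simp
      linear_combination hrelQ
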